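/- Let $(\delta_k)_{k\geq0}$ be nonnegative reals with $[\delta]_{1+\rho} < \infty$ for some $\rho > 0$, $K \in (1,2]$, and let $(\varepsilon_j)$ be a decreasing positive sequence with $\varepsilon_0 = 1$ satisfying $\varepsilon_\ell/\varepsilon_k \leq K(1-K^{-1})^{\ell-k}$ for $\ell \geq k$ and $\sum_{j=0}^k \varepsilon_k/\varepsilon_j \leq 3$ for all $k$. Define $M_m = \max\big\{\sum_{j=0}^{m}\frac{\varepsilon_m}{\varepsilon_j}\sum_{k=j}^{\infty}\delta_k,\ \sum_{j=0}^m\frac{\varepsilon_m}{\varepsilon_j}\sum_{k=1}^\infty k^{\rho/2}\delta_{k+m}\big\}$. Then $\sum_{\ell=m}^{\infty} M_\ell \leq 27([\delta]_0+[\delta]_1)\max\{m^{-1},(1-K^{-1})^{m-1}\} + 6 m^{-\rho/2}[\delta]_{1+\rho}$ for all $m \geq 1$; in particular $\sum_{\ell=m}^\infty M_\ell \to 0$ as $m \to \infty$, so for every $T > 0$ there exists $m_0$ with $T\sum_{\ell=m_0}^\infty M_\ell \leq 1$. -/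

import Mathlib

open scoped ENNReal

section StmtHelpers

private lemma shiftE13 (f : ℕ → ℝ≥0∞) (k : ℕ) :
    ∑' i, f i = ∑ i ∈ Finset.range k, f i + ∑' i, f (k + i) := by
  have hsplit : ∀ i : ℕ, f i = (if i < k then f i else 0) + (if k ≤ i then f i else 0) := by
    intro i
    by_cases h : i < k
    · rw [if_pos h, if_neg (by omega), add_zero]
    · rw [if_neg h, if_pos (by omega), zero_add]
  rw [tsum_congr hsplit, ENNReal.tsum_add]
  congr 1
  · rw [tsum_eq_sum (s := Finset.range k) (fun i hi => if_neg (by simpa using hi))]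
    exact Finset.sum_congr rfl fun i hi => if_pos (Finset.mem_range.1 hi)
  · have hinj : Function.Injective (fun i : ℕ => k + i) := fun x y h => by simpa using h
    have hsupp : Function.support (fun i => if k ≤ i then f i else 0)
        ⊆ Set.range (fun i : ℕ => k + i) := by
      intro n hn
      by_cases h : k ≤ n
      · exact ⟨n - k, Nat.add_sub_cancel' h⟩
      · simp [h] at hn
    have h2 := hinj.tsum_eq (f := fun i => if k ≤ i then f i else 0) hsupp
    rw [← h2]
    exact tsum_congr fun i => if_pos (Nat.le_add_right k i)

private lemma tailE13 (g : ℕ → ℝ≥0∞) (b : ℕ) : ∑' n, g (b + n) ≤ ∑' n, g n :=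
  ENNReal.tsum_comp_le_tsum_of_injective
    (fun x y h => by simpa using h : Function.Injective (b + ·)) g

private lemma keyE13 (c a : ℕ → ℝ≥0∞) :
    ∑' (j : ℕ), c j * ∑' (i : ℕ), a (j + i)
      = ∑' (n : ℕ), (∑ j ∈ Finset.range (n + 1), c j) * a n := by
  have h1 : ∀ j : ℕ, c j * ∑' (i : ℕ), a (j + i)
      = ∑' (n : ℕ), if j ≤ n then c j * a n else 0 := by
    intro j
    rw [← ENNReal.tsum_mul_left]
    have hinj : Function.Injective (fun i : ℕ => j + i) := fun x y h => by simpa using h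
    have hsupp : Function.support (fun n => if j ≤ n then c j * a n else 0)
        ⊆ Set.range (fun i : ℕ => j + i) := by
      intro n hn
      by_cases h : j ≤ n
      · exact ⟨n - j, Nat.add_sub_cancel' h⟩
      · simp [h] at hn
    have h2 := hinj.tsum_eq (f := fun n => if j ≤ n then c j * a n else 0) hsupp
    rw [← h2]
    exact tsum_congr fun i => (if_pos (Nat.le_add_right j i)).symm
  calc ∑' j, c j * ∑' i, a (j + i)
      = ∑' (j : ℕ) (n : ℕ), if j ≤ n then c j * a n else 0 := tsum_congr h1
    _ = ∑' (n : ℕ) (j : ℕ), if j ≤ n then c j * a n else 0 := ENNReal.tsum_comm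
    _ = ∑' (n : ℕ), (∑ j ∈ Finset.range (n + 1), c j) * a n := by
        refine tsum_congr fun n => ?_
        rw [tsum_eq_sum (s := Finset.range (n + 1))
          (fun j hj => if_neg (by simp at hj; omega)), Finset.sum_mul]
        exact Finset.sum_congr rfl fun j hj => if_pos (by simp at hj; omega)

private lemma twopow13 : ∀ m : ℕ, m ≤ 2 ^ (m - m / 2) := by
  intro m
  induction m using Nat.strong_induction_on with
  | _ m ih =>
    match m with
    | 0 => decide
    | 1 => decide
    | 2 => decide
    | 3 => decide
    | (n+4) =>
      have h1 := ih (n + 2) (by omega)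
      have h2 : (n + 4) - (n + 4) / 2 = ((n + 2) - (n + 2) / 2) + 1 := by omega
      rw [h2, pow_succ]
      omega

private lemma realkey13 {u mm x ρ : ℝ} (hu : 1 ≤ u) (hm : 1 ≤ mm) (hxu : u ≤ x)
    (hxm : mm ≤ x) (hρ : 0 < ρ) :
    u * u ^ (ρ / 2) ≤ mm ^ (-(ρ / 2)) * x ^ (1 + ρ) := by
  have hx1 : (1:ℝ) ≤ x := le_trans hu hxu
  have hx0 : (0:ℝ) < x := lt_of_lt_of_le one_pos hx1
  have hmp : (0:ℝ) < mm ^ (ρ / 2) := Real.rpow_pos_of_pos (by linarith) _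
  have h1 : u ^ (ρ / 2) ≤ x ^ (ρ / 2) := Real.rpow_le_rpow (by linarith) hxu (by linarith)
  have h2 : mm ^ (ρ / 2) ≤ x ^ (ρ / 2) := Real.rpow_le_rpow (by linarith) hxm (by linarith)
  have hup : (0:ℝ) ≤ u ^ (ρ / 2) := Real.rpow_nonneg (by linarith) _
  have hxp : (0:ℝ) ≤ x ^ (ρ / 2) := Real.rpow_nonneg (by linarith) _
  have h4 : (x * x ^ (ρ / 2)) * x ^ (ρ / 2) = x ^ (1 + ρ) := by
    rw [show (1 + ρ : ℝ) = (1 + ρ / 2) + ρ / 2 by ring, Real.rpow_add hx0,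
      Real.rpow_add hx0, Real.rpow_one]
  have key : (u * u ^ (ρ / 2)) * mm ^ (ρ / 2) ≤ x ^ (1 + ρ) := by
    rw [← h4]
    have h5 : u * u ^ (ρ / 2) ≤ x * x ^ (ρ / 2) :=
      mul_le_mul hxu h1 hup (by linarith)
    exact mul_le_mul h5 h2 hmp.le (by positivity)
  have hrw : mm ^ (-(ρ / 2)) = (mm ^ (ρ / 2))⁻¹ := Real.rpow_neg (by linarith) _
  rw [hrw]
  have heq : u * u ^ (ρ / 2) = ((u * u ^ (ρ / 2)) * mm ^ (ρ / 2)) * (mm ^ (ρ / 2))⁻¹ := by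
    field_simp
  rw [heq]
  calc ((u * u ^ (ρ / 2)) * mm ^ (ρ / 2)) * (mm ^ (ρ / 2))⁻¹
      ≤ x ^ (1 + ρ) * (mm ^ (ρ / 2))⁻¹ := mul_le_mul_of_nonneg_right key (by positivity)
    _ = (mm ^ (ρ / 2))⁻¹ * x ^ (1 + ρ) := by ring

private lemma castpow13 (k : ℕ) {s : ℝ} (hs : 0 < s) :
    ((k : ℝ≥0∞)) ^ s = ENNReal.ofReal ((k : ℝ) ^ s) := by
  rcases Nat.eq_zero_or_pos k with rfl | hk
  · simp [ENNReal.zero_rpow_of_pos hs, Real.zero_rpow (ne_of_gt hs)]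
  · rw [← ENNReal.ofReal_natCast k,
      ENNReal.ofReal_rpow_of_pos (by exact_mod_cast hk)]

private lemma coef13 {ρ : ℝ} (hρ : 0 < ρ) (m b n : ℕ) (hm : 1 ≤ m) (hmb : m ≤ b) :
    ENNReal.ofReal (((n : ℝ) + 1) * ((n : ℝ) + 1) ^ (ρ / 2))
      ≤ ENNReal.ofReal ((m : ℝ) ^ (-(ρ / 2))) * (((b + n : ℕ) : ℝ≥0∞)) ^ (1 + ρ) := by
  rw [castpow13 _ (by linarith : (0:ℝ) < 1 + ρ),
    ← ENNReal.ofReal_mul (Real.rpow_nonneg (Nat.cast_nonneg m) _)]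
  apply ENNReal.ofReal_le_ofReal
  have hm1 : (1:ℝ) ≤ (m:ℝ) := by exact_mod_cast hm
  have hb1 : (1:ℝ) ≤ (b:ℝ) := by exact_mod_cast le_trans hm hmb
  have hcast : ((b + n : ℕ) : ℝ) = (b : ℝ) + (n : ℝ) := by push_cast; ring
  rw [hcast]
  have hn0 : (0:ℝ) ≤ (n:ℝ) := Nat.cast_nonneg n
  have hmbR : (m:ℝ) ≤ (b:ℝ) := by exact_mod_cast hmb
  exact realkey13 (by linarith) hm1 (by linarith) (by linarith) hρ

/-- the shared weighted-tail bound -/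
private lemma wtail13 (δ : ℕ → ℝ≥0∞) {ρ : ℝ} (hρ : 0 < ρ) (m b : ℕ) (hm : 1 ≤ m)
    (hmb : m ≤ b) (C : ℕ → ℝ≥0∞)
    (hC : ∀ n, C n ≤ ENNReal.ofReal (((n : ℝ) + 1) * ((n : ℝ) + 1) ^ (ρ / 2))) :
    ∑' n, C n * δ (b + n)
      ≤ ENNReal.ofReal ((m : ℝ) ^ (-(ρ / 2))) * ∑' k : ℕ, (k : ℝ≥0∞) ^ (1 + ρ) * δ k := by
  calc ∑' n, C n * δ (b + n)
      ≤ ∑' n, (ENNReal.ofReal ((m : ℝ) ^ (-(ρ / 2))) *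
          ((((b + n : ℕ) : ℝ≥0∞)) ^ (1 + ρ) * δ (b + n))) := by
        refine Summable.tsum_le_tsum (fun n => ?_) ENNReal.summable ENNReal.summable
        rw [← mul_assoc]
        exact mul_le_mul_left ((hC n).trans (coef13 hρ m b n hm hmb)) _
    _ = ENNReal.ofReal ((m : ℝ) ^ (-(ρ / 2))) *
          ∑' n, (((b + n : ℕ) : ℝ≥0∞)) ^ (1 + ρ) * δ (b + n) := ENNReal.tsum_mul_left
    _ ≤ ENNReal.ofReal ((m : ℝ) ^ (-(ρ / 2))) * ∑' k : ℕ, (k : ℝ≥0∞) ^ (1 + ρ) * δ k := by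
        exact mul_le_mul_right (tailE13 (fun k => (k : ℝ≥0∞) ^ (1 + ρ) * δ k) b) _

end StmtHelpers

set_option maxHeartbeats 1600000 in
/-- Lemma 4.4 -/
theorem stmt_13 (δ : ℕ → ℝ≥0∞) (ρ : ℝ) (hρ : 0 < ρ)
    (h0 : ∑' k : ℕ, δ k < ∞)
    (hρfin : ∑' k : ℕ, (k : ℝ≥0∞) ^ (1 + ρ) * δ k < ∞)
    (ε : ℕ → ℝ) (hpos : ∀ j, 0 < ε j) (hdec : Antitone ε) (hε0 : ε 0 = 1)
    (K : ℝ) (hK1 : 1 < K) (hK2 : K ≤ 2)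
    (hgeo : ∀ k ℓ : ℕ, k ≤ ℓ → ε ℓ / ε k ≤ K * (1 - K⁻¹) ^ (ℓ - k))
    (hpartial : ∀ k : ℕ, ∑ j ∈ Finset.range (k + 1), ε k / ε j ≤ 3)
    (M : ℕ → ℝ≥0∞)
    (hM : ∀ m : ℕ, M m =
      max (∑ j ∈ Finset.range (m + 1),
            ENNReal.ofReal (ε m / ε j) * ∑' k : ℕ, δ (j + k))
          (∑ j ∈ Finset.range (m + 1),
            ENNReal.ofReal (ε m / ε j) *
              ∑' k : ℕ, ((k + 1 : ℕ) : ℝ≥0∞) ^ (ρ / 2) * δ (k + 1 + m))) :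
    (∀ m : ℕ, 1 ≤ m →
      ∑' ℓ : ℕ, M (m + ℓ) ≤
        ENNReal.ofReal (27 * max ((m : ℝ)⁻¹) ((1 - K⁻¹) ^ (m - 1))) *
            ((∑' k : ℕ, δ k) + ∑' k : ℕ, (k : ℝ≥0∞) * δ k) +
          ENNReal.ofReal (6 * (m : ℝ) ^ (-(ρ / 2))) *
            ∑' k : ℕ, (k : ℝ≥0∞) ^ (1 + ρ) * δ k) ∧
    ∀ T : ℝ, 0 < T → ∃ m₀ : ℕ,
      ENNReal.ofReal T * ∑' ℓ : ℕ, M (m₀ + ℓ) ≤ 1 := by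
  -- basic constants
  have hKpos : (0:ℝ) < K := lt_trans one_pos hK1
  have hKK : K * K⁻¹ = 1 := mul_inv_cancel₀ (ne_of_gt hKpos)
  have hKinv : (0:ℝ) < K⁻¹ := inv_pos.2 hKpos
  set q : ℝ := 1 - K⁻¹ with hqdef
  have hq0 : 0 < q := by
    have : K⁻¹ < 1 := by nlinarith
    simp only [hqdef]; linarith
  have hqhalf : q ≤ 1 / 2 := by
    have : (1:ℝ)/2 ≤ K⁻¹ := by nlinarith
    simp only [hqdef]; linarith
  have hq1 : q < 1 := by simp only [hqdef]; linarith
  set D0 : ℝ≥0∞ := ∑' k : ℕ, δ k with hD0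
  set D1 : ℝ≥0∞ := ∑' k : ℕ, (k : ℝ≥0∞) * δ k with hD1
  set Dρ : ℝ≥0∞ := ∑' k : ℕ, (k : ℝ≥0∞) ^ (1 + ρ) * δ k with hDρ
  -- sum of all tails
  have hTD : ∑' (j : ℕ), (∑' (k : ℕ), δ (j + k)) = D0 + D1 := by
    have h := keyE13 (fun _ => 1) δ
    simp only [one_mul, Finset.sum_const, Finset.card_range, nsmul_eq_mul, mul_one] at h
    rw [h]
    calc ∑' (n : ℕ), ((n + 1 : ℕ) : ℝ≥0∞) * δ n
        = ∑' (n : ℕ), (δ n + (n : ℝ≥0∞) * δ n) := by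
          refine tsum_congr fun n => ?_
          push_cast
          ring
      _ = D0 + D1 := by rw [ENNReal.tsum_add]
  -- geometric sum
  have hgeomsum : ∀ C : ℝ, 0 ≤ C →
      ∑' ℓ : ℕ, ENNReal.ofReal (C * q ^ ℓ) = ENNReal.ofReal (C * K) := by
    intro C hC
    have h1 : ∀ ℓ : ℕ, ENNReal.ofReal (C * q ^ ℓ)
        = ENNReal.ofReal C * (ENNReal.ofReal q) ^ ℓ := by
      intro ℓ
      rw [ENNReal.ofReal_mul hC, ENNReal.ofReal_pow hq0.le]
    rw [tsum_congr h1, ENNReal.tsum_mul_left, ENNReal.tsum_geometric]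
    have h2 : (1 : ℝ≥0∞) - ENNReal.ofReal q = ENNReal.ofReal K⁻¹ := by
      rw [← ENNReal.ofReal_one, ← ENNReal.ofReal_sub _ hq0.le]
      congr 1
      simp only [hqdef]; ring
    rw [h2, ← ENNReal.ofReal_inv_of_pos hKinv, inv_inv, ← ENNReal.ofReal_mul hC]
  -- D1 finite
  have hD1le : D1 ≤ Dρ := by
    refine Summable.tsum_le_tsum (fun k => ?_) ENNReal.summable ENNReal.summable
    refine mul_le_mul_left ?_ _
    rcases Nat.eq_zero_or_pos k with rfl | hk
    · simp
    · calc (k : ℝ≥0∞) = (k : ℝ≥0∞) ^ (1:ℝ) := by rw [ENNReal.rpow_one]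
        _ ≤ (k : ℝ≥0∞) ^ (1 + ρ) := ENNReal.rpow_le_rpow_of_exponent_le
            (by exact_mod_cast hk) (by linarith)
  -- PART 1
  have part1 : ∀ m : ℕ, 1 ≤ m →
      ∑' ℓ : ℕ, M (m + ℓ) ≤
        ENNReal.ofReal (27 * max ((m : ℝ)⁻¹) (q ^ (m - 1))) * (D0 + D1) +
          ENNReal.ofReal (6 * (m : ℝ) ^ (-(ρ / 2))) * Dρ := by
    intro m hm
    have hm0 : (0:ℝ) < m := by exact_mod_cast hm
    -- tail of T bound : ∑' i, T (m+i) ≤ ofReal (m^{-ρ/2}) * Dρ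
    have hTtail : ∑' (i : ℕ), (∑' (k : ℕ), δ ((m + i) + k))
        ≤ ENNReal.ofReal ((m : ℝ) ^ (-(ρ / 2))) * Dρ := by
      have hrw : ∑' (i : ℕ), (∑' (k : ℕ), δ ((m + i) + k))
          = ∑' (i : ℕ), (1 : ℝ≥0∞) * ∑' (k : ℕ), (fun n => δ (m + n)) (i + k) := by
        refine tsum_congr fun i => ?_
        rw [one_mul]
        exact tsum_congr fun k => by rw [show (m + i) + k = m + (i + k) by omega]
      rw [hrw, keyE13 (fun _ => 1) (fun n => δ (m + n))]
      simp only [Finset.sum_const, Finset.card_range, nsmul_eq_mul, mul_one]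
      have : ∑' (n : ℕ), ((n + 1 : ℕ) : ℝ≥0∞) * δ (m + n)
          ≤ ENNReal.ofReal ((m : ℝ) ^ (-(ρ / 2))) * Dρ := by
        refine wtail13 δ hρ m m hm le_rfl _ (fun n => ?_)
        have h1 : ((n + 1 : ℕ) : ℝ≥0∞) = ENNReal.ofReal ((n : ℝ) + 1) := by
          rw [← ENNReal.ofReal_natCast]; congr 1; push_cast; ring
        rw [h1]
        apply ENNReal.ofReal_le_ofReal
        have h2 : (1:ℝ) ≤ ((n:ℝ) + 1) ^ (ρ / 2) :=
          Real.one_le_rpow (by linarith [Nat.cast_nonneg (α := ℝ) n]) (by linarith)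
        nlinarith [Nat.cast_nonneg (α := ℝ) n]
      exact this
    -- B part
    have hS : ∑' (ℓ : ℕ), (∑' (k : ℕ), ((k + 1 : ℕ) : ℝ≥0∞) ^ (ρ / 2) * δ (k + 1 + (m + ℓ)))
        ≤ ENNReal.ofReal ((m : ℝ) ^ (-(ρ / 2))) * Dρ := by
      have hswap : ∑' (ℓ : ℕ), (∑' (k : ℕ), ((k + 1 : ℕ) : ℝ≥0∞) ^ (ρ / 2) * δ (k + 1 + (m + ℓ)))
          = ∑' (k : ℕ), ((k + 1 : ℕ) : ℝ≥0∞) ^ (ρ / 2) *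
              ∑' (ℓ : ℕ), (fun n => δ ((1 + m) + n)) (k + ℓ) := by
        rw [ENNReal.tsum_comm]
        refine tsum_congr fun k => ?_
        rw [← ENNReal.tsum_mul_left]
        exact tsum_congr fun ℓ => by rw [show k + 1 + (m + ℓ) = (1 + m) + (k + ℓ) by omega]
      rw [hswap, keyE13 _ (fun n => δ ((1 + m) + n))]
      refine wtail13 δ hρ m (1 + m) hm (by omega) _ (fun n => ?_)
      calc ∑ k ∈ Finset.range (n + 1), ((k + 1 : ℕ) : ℝ≥0∞) ^ (ρ / 2)
          ≤ ∑ k ∈ Finset.range (n + 1), ENNReal.ofReal (((n : ℝ) + 1) ^ (ρ / 2)) := by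
            refine Finset.sum_le_sum fun k hk => ?_
            rw [castpow13 _ (by linarith : (0:ℝ) < ρ/2)]
            apply ENNReal.ofReal_le_ofReal
            refine Real.rpow_le_rpow (Nat.cast_nonneg _) ?_ (by linarith)
            have hkn : (k:ℝ) ≤ (n:ℝ) := by
              exact_mod_cast Nat.lt_succ_iff.mp (Finset.mem_range.1 hk)
            push_cast
            linarith
        _ ≤ ENNReal.ofReal (((n : ℝ) + 1) * ((n : ℝ) + 1) ^ (ρ / 2)) := by
            rw [Finset.sum_const, Finset.card_range, nsmul_eq_mul]
            rw [show ((n + 1 : ℕ) : ℝ≥0∞) = ENNReal.ofReal ((n:ℝ) + 1) by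
              rw [← ENNReal.ofReal_natCast]; congr 1; push_cast; ring]
            rw [← ENNReal.ofReal_mul (by positivity)]
    -- high-j tail bound for T
    have hThigh : ∀ j : ℕ, m / 2 + 1 ≤ j →
        (∑' (k : ℕ), δ (j + k)) ≤ ENNReal.ofReal (2 * (m:ℝ)⁻¹) * D1 := by
      intro j hj
      have hj0 : 0 < j := by omega
      have hjT : (j : ℝ≥0∞) * ∑' (k : ℕ), δ (j + k) ≤ D1 := by
        rw [← ENNReal.tsum_mul_left]
        refine le_trans (Summable.tsum_le_tsum (fun k => ?_) ENNReal.summable ENNReal.summable)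
          (tailE13 (fun n => (n : ℝ≥0∞) * δ n) j)
        exact mul_le_mul_left (by exact_mod_cast Nat.cast_le.2 (Nat.le_add_right j k)) _
      have hjne : ((j : ℝ≥0∞)) ≠ 0 := by
        simpa using Nat.pos_iff_ne_zero.mp hj0
      have hjtop : ((j : ℝ≥0∞)) ≠ ⊤ := ENNReal.natCast_ne_top j
      have h1 : (∑' (k : ℕ), δ (j + k)) = (j : ℝ≥0∞)⁻¹ * ((j : ℝ≥0∞) * ∑' (k : ℕ), δ (j + k)) := by
        rw [← mul_assoc, ENNReal.inv_mul_cancel hjne hjtop, one_mul]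
      rw [h1]
      refine le_trans (mul_le_mul_right hjT _) ?_
      refine mul_le_mul_left ?_ _
      have hcast : ((j : ℝ≥0∞))⁻¹ = ENNReal.ofReal ((j:ℝ)⁻¹) := by
        rw [← ENNReal.ofReal_natCast j,
          ← ENNReal.ofReal_inv_of_pos (by exact_mod_cast hj0 : (0:ℝ) < (j:ℝ))]
      rw [hcast]
      apply ENNReal.ofReal_le_ofReal
      have h2j : (m:ℝ) ≤ 2 * (j:ℝ) := by exact_mod_cast (by omega : m ≤ 2 * j)
      have hjR : (0:ℝ) < (j:ℝ) := by exact_mod_cast hj0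
      rw [show (2:ℝ) * (m:ℝ)⁻¹ = 2 / (m:ℝ) by ring, le_div_iff₀ hm0]
      have hji : (j:ℝ)⁻¹ * (2 * (j:ℝ)) = 2 := by field_simp
      nlinarith [mul_le_mul_of_nonneg_left h2j (inv_pos.2 hjR).le]
    -- W bounds
    have hW1 : ∀ j, j < m →
        (∑' (ℓ : ℕ), if j ≤ m + ℓ then ENNReal.ofReal (ε (m + ℓ) / ε j) else 0)
          ≤ ENNReal.ofReal (4 * q ^ (m - j)) := by
      intro j hj
      have hle : ∀ ℓ : ℕ, (if j ≤ m + ℓ then ENNReal.ofReal (ε (m + ℓ) / ε j) else 0)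
          ≤ ENNReal.ofReal ((K * q ^ (m - j)) * q ^ ℓ) := by
        intro ℓ
        rw [if_pos (by omega)]
        refine le_trans (ENNReal.ofReal_le_ofReal (hgeo j (m + ℓ) (by omega))) ?_
        apply ENNReal.ofReal_le_ofReal
        rw [show (m + ℓ) - j = (m - j) + ℓ by omega, pow_add]
        exact le_of_eq (by ring)
      calc (∑' (ℓ : ℕ), if j ≤ m + ℓ then ENNReal.ofReal (ε (m + ℓ) / ε j) else 0)
          ≤ ∑' (ℓ : ℕ), ENNReal.ofReal ((K * q ^ (m - j)) * q ^ ℓ) :=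
            Summable.tsum_le_tsum hle ENNReal.summable ENNReal.summable
        _ = ENNReal.ofReal ((K * q ^ (m - j)) * K) :=
            hgeomsum _ (by positivity)
        _ ≤ ENNReal.ofReal (4 * q ^ (m - j)) := by
            apply ENNReal.ofReal_le_ofReal
            nlinarith [mul_nonneg (mul_nonneg (by linarith : (0:ℝ) ≤ 2 - K)
              (by linarith : (0:ℝ) ≤ 2 + K)) (pow_nonneg hq0.le (m - j))]
    have hW2 : ∀ i : ℕ,
        (∑' (ℓ : ℕ), if m + i ≤ m + ℓ then ENNReal.ofReal (ε (m + ℓ) / ε (m + i)) else 0)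
          ≤ ENNReal.ofReal 3 := by
      intro i
      rw [shiftE13 _ i]
      have hz : ∑ ℓ ∈ Finset.range i,
          (if m + i ≤ m + ℓ then ENNReal.ofReal (ε (m + ℓ) / ε (m + i)) else 0) = 0 :=
        Finset.sum_eq_zero fun ℓ hℓ => if_neg (by simp at hℓ; omega)
      rw [hz, zero_add]
      have h1 : ∀ ℓ : ℕ, (if m + i ≤ m + (i + ℓ)
            then ENNReal.ofReal (ε (m + (i + ℓ)) / ε (m + i)) else 0)
          = ENNReal.ofReal (ε (m + i + ℓ) / ε (m + i)) := by
        intro ℓ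
        rw [if_pos (by omega), show m + (i + ℓ) = m + i + ℓ by omega]
      rw [tsum_congr h1, shiftE13 _ 1]
      have h2 : ∑ ℓ ∈ Finset.range 1, ENNReal.ofReal (ε (m + i + ℓ) / ε (m + i)) = 1 := by
        rw [Finset.sum_range_one, add_zero, div_self (ne_of_gt (hpos (m + i))),
          ENNReal.ofReal_one]
      rw [h2]
      have h3 : ∑' (ℓ : ℕ), ENNReal.ofReal (ε (m + i + (1 + ℓ)) / ε (m + i))
          ≤ ENNReal.ofReal 2 := by
        have hle : ∀ ℓ : ℕ, ENNReal.ofReal (ε (m + i + (1 + ℓ)) / ε (m + i))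
            ≤ ENNReal.ofReal ((K * q) * q ^ ℓ) := by
          intro ℓ
          refine le_trans (ENNReal.ofReal_le_ofReal
            (hgeo (m + i) (m + i + (1 + ℓ)) (by omega))) ?_
          apply ENNReal.ofReal_le_ofReal
          rw [show (m + i + (1 + ℓ)) - (m + i) = 1 + ℓ by omega, pow_add, pow_one]
          exact le_of_eq (by ring)
        refine le_trans (Summable.tsum_le_tsum hle ENNReal.summable ENNReal.summable) ?_
        rw [hgeomsum _ (by positivity)]
        apply ENNReal.ofReal_le_ofReal
        have hKq : K * q * K = K * K - K := by
          rw [hqdef]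
          linear_combination (-K) * hKK
        nlinarith [mul_nonneg (sub_nonneg.2 hK2) (by linarith : (0:ℝ) ≤ K + 1)]
      calc (1 : ℝ≥0∞) + ∑' (ℓ : ℕ), ENNReal.ofReal (ε (m + i + (1 + ℓ)) / ε (m + i))
          ≤ 1 + ENNReal.ofReal 2 := add_le_add_right h3 _
        _ = ENNReal.ofReal 3 := by
            rw [← ENNReal.ofReal_one, ← ENNReal.ofReal_add zero_le_one (by norm_num)]
            norm_num
    -- decompose M
    have hM1 : ∀ ℓ : ℕ, M (m + ℓ) ≤
        (∑' (j : ℕ), (if j ≤ m + ℓ then ENNReal.ofReal (ε (m + ℓ) / ε j) else 0) *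
          (∑' (k : ℕ), δ (j + k))) +
        ENNReal.ofReal 3 * (∑' (k : ℕ), ((k + 1 : ℕ) : ℝ≥0∞) ^ (ρ / 2) * δ (k + 1 + (m + ℓ))) := by
      intro ℓ
      rw [hM (m + ℓ)]
      apply max_le
      · have heq : (∑ j ∈ Finset.range (m + ℓ + 1),
            ENNReal.ofReal (ε (m + ℓ) / ε j) * ∑' (k : ℕ), δ (j + k))
            = ∑' (j : ℕ), (if j ≤ m + ℓ then ENNReal.ofReal (ε (m + ℓ) / ε j) else 0) *
              (∑' (k : ℕ), δ (j + k)) := by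
          rw [tsum_eq_sum (s := Finset.range (m + ℓ + 1)) (fun j hj => by
            rw [if_neg (by simp at hj; omega), zero_mul])]
          exact Finset.sum_congr rfl fun j hj => by rw [if_pos (by simp at hj; omega)]
        rw [heq]
        exact le_self_add
      · have heq : (∑ j ∈ Finset.range (m + ℓ + 1), ENNReal.ofReal (ε (m + ℓ) / ε j) *
            (∑' (k : ℕ), ((k + 1 : ℕ) : ℝ≥0∞) ^ (ρ / 2) * δ (k + 1 + (m + ℓ))))
            = (∑ j ∈ Finset.range (m + ℓ + 1), ENNReal.ofReal (ε (m + ℓ) / ε j)) *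
              (∑' (k : ℕ), ((k + 1 : ℕ) : ℝ≥0∞) ^ (ρ / 2) * δ (k + 1 + (m + ℓ))) :=
          (Finset.sum_mul _ _ _).symm
        rw [heq]
        refine le_trans (mul_le_mul_left ?_ _) le_add_self
        rw [← ENNReal.ofReal_sum_of_nonneg
          (fun i _ => le_of_lt (div_pos (hpos _) (hpos _)))]
        exact ENNReal.ofReal_le_ofReal (hpartial (m + ℓ))
    -- the A double sum
    have hAswap : (∑' (ℓ : ℕ) (j : ℕ),
          (if j ≤ m + ℓ then ENNReal.ofReal (ε (m + ℓ) / ε j) else 0) * (∑' (k : ℕ), δ (j + k)))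
        = ∑' (j : ℕ),
            (∑' (ℓ : ℕ), if j ≤ m + ℓ then ENNReal.ofReal (ε (m + ℓ) / ε j) else 0) *
              (∑' (k : ℕ), δ (j + k)) := by
      rw [ENNReal.tsum_comm]
      exact tsum_congr fun j => ENNReal.tsum_mul_right
    -- abbreviations
    set X : ℝ := max ((m : ℝ)⁻¹) (q ^ (m - 1)) with hXdef
    have hX0 : (0:ℝ) < X := lt_of_lt_of_le (inv_pos.2 hm0) (le_max_left _ _)
    have hXm : (m:ℝ)⁻¹ ≤ X := le_max_left _ _
    -- low-j coefficient
    have hqr : q ^ (m - m / 2) ≤ (m:ℝ)⁻¹ := by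
      have h1 : q ^ (m - m / 2) ≤ (1/2 : ℝ) ^ (m - m / 2) :=
        pow_le_pow_left₀ hq0.le hqhalf _
      have h2 : (m:ℝ) ≤ (2:ℝ) ^ (m - m / 2) := by exact_mod_cast twopow13 m
      have h3 : ((1:ℝ)/2) ^ (m - m / 2) = ((2:ℝ) ^ (m - m / 2))⁻¹ := by
        rw [div_pow, one_pow, one_div]
      rw [h3] at h1
      exact le_trans h1 (inv_anti₀ hm0 h2)
    -- sum over Ico of coefficients
    have hIco : ∑ j ∈ Finset.Ico (m / 2 + 1) m, (4 * q ^ (m - j)) ≤ 4 := by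
      have hsub : Finset.Ico (m / 2 + 1) m ⊆ Finset.range m := by
        intro j hj
        simp only [Finset.mem_Ico] at hj
        exact Finset.mem_range.2 hj.2
      have h1 : ∑ j ∈ Finset.Ico (m / 2 + 1) m, (4 * q ^ (m - j))
          ≤ ∑ j ∈ Finset.range m, (4 * q ^ (m - j)) :=
        Finset.sum_le_sum_of_subset_of_nonneg hsub (fun j _ _ => by positivity)
      have h2 : ∑ j ∈ Finset.range m, (4 * q ^ (m - j))
          = ∑ i ∈ Finset.range m, (4 * q ^ (i + 1)) := by
        rw [← Finset.sum_range_reflect (fun i => 4 * q ^ (i + 1)) m]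
        refine Finset.sum_congr rfl fun j hj => ?_
        rw [show (m - 1 - j) + 1 = m - j by
          have := Finset.mem_range.1 hj; omega]
      have h3 : ∑ i ∈ Finset.range m, (4 * q ^ (i + 1))
          ≤ ∑ i ∈ Finset.range m, (4 * (1/2:ℝ) ^ (i + 1)) := by
        refine Finset.sum_le_sum fun i _ => ?_
        have := pow_le_pow_left₀ hq0.le hqhalf (i + 1)
        linarith
      have h4 : ∑ i ∈ Finset.range m, (4 * (1/2:ℝ) ^ (i + 1))
          = 2 * ∑ i ∈ Finset.range m, ((1/2:ℝ)) ^ i := by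
        rw [Finset.mul_sum]
        refine Finset.sum_congr rfl fun i _ => ?_
        rw [pow_succ]
        ring
      have h5 := sum_geometric_two_le m
      linarith
    -- now assemble part 1
    calc ∑' (ℓ : ℕ), M (m + ℓ)
        ≤ ∑' (ℓ : ℕ), ((∑' (j : ℕ),
            (if j ≤ m + ℓ then ENNReal.ofReal (ε (m + ℓ) / ε j) else 0) *
              (∑' (k : ℕ), δ (j + k))) +
          ENNReal.ofReal 3 *
            (∑' (k : ℕ), ((k + 1 : ℕ) : ℝ≥0∞) ^ (ρ / 2) * δ (k + 1 + (m + ℓ)))) :=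
          Summable.tsum_le_tsum hM1 ENNReal.summable ENNReal.summable
      _ = (∑' (ℓ : ℕ) (j : ℕ),
            (if j ≤ m + ℓ then ENNReal.ofReal (ε (m + ℓ) / ε j) else 0) *
              (∑' (k : ℕ), δ (j + k))) +
          ENNReal.ofReal 3 * ∑' (ℓ : ℕ),
            (∑' (k : ℕ), ((k + 1 : ℕ) : ℝ≥0∞) ^ (ρ / 2) * δ (k + 1 + (m + ℓ))) := by
          rw [ENNReal.tsum_add, ENNReal.tsum_mul_left]
      _ ≤ (∑' (j : ℕ),
            (∑' (ℓ : ℕ), if j ≤ m + ℓ then ENNReal.ofReal (ε (m + ℓ) / ε j) else 0) *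
              (∑' (k : ℕ), δ (j + k))) +
          ENNReal.ofReal 3 * (ENNReal.ofReal ((m : ℝ) ^ (-(ρ / 2))) * Dρ) := by
          rw [hAswap]
          exact add_le_add_right (mul_le_mul_right hS _) _
      _ ≤ (ENNReal.ofReal (12 * X) * (D0 + D1) +
            ENNReal.ofReal 3 * (ENNReal.ofReal ((m : ℝ) ^ (-(ρ / 2))) * Dρ)) +
          ENNReal.ofReal 3 * (ENNReal.ofReal ((m : ℝ) ^ (-(ρ / 2))) * Dρ) := by
          refine add_le_add_left ?_ _
          -- split the j-sum at m
          rw [shiftE13 (fun j =>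
            (∑' (ℓ : ℕ), if j ≤ m + ℓ then ENNReal.ofReal (ε (m + ℓ) / ε j) else 0) *
              (∑' (k : ℕ), δ (j + k))) m]
          refine add_le_add ?_ ?_
          · -- finite part over range m
            have hstep : ∀ j ∈ Finset.range m,
                (∑' (ℓ : ℕ), if j ≤ m + ℓ then ENNReal.ofReal (ε (m + ℓ) / ε j) else 0) *
                  (∑' (k : ℕ), δ (j + k))
                ≤ ENNReal.ofReal (4 * q ^ (m - j)) * (∑' (k : ℕ), δ (j + k)) :=
              fun j hj => mul_le_mul_left (hW1 j (Finset.mem_range.1 hj)) _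
            refine le_trans (Finset.sum_le_sum hstep) ?_
            have hcm : m / 2 + 1 ≤ m := by omega
            have hsplit : ∑ j ∈ Finset.range m,
                ENNReal.ofReal (4 * q ^ (m - j)) * (∑' (k : ℕ), δ (j + k))
                = ∑ j ∈ Finset.range (m / 2 + 1),
                    ENNReal.ofReal (4 * q ^ (m - j)) * (∑' (k : ℕ), δ (j + k)) +
                  ∑ j ∈ Finset.Ico (m / 2 + 1) m,
                    ENNReal.ofReal (4 * q ^ (m - j)) * (∑' (k : ℕ), δ (j + k)) := by
              rw [Finset.range_eq_Ico, ← Finset.sum_Ico_consecutive _ (Nat.zero_le _) hcm,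
                ← Finset.range_eq_Ico]
            rw [hsplit]
            have hlow : ∑ j ∈ Finset.range (m / 2 + 1),
                ENNReal.ofReal (4 * q ^ (m - j)) * (∑' (k : ℕ), δ (j + k))
                ≤ ENNReal.ofReal (4 * X) * (D0 + D1) := by
              have h1 : ∀ j ∈ Finset.range (m / 2 + 1),
                  ENNReal.ofReal (4 * q ^ (m - j)) * (∑' (k : ℕ), δ (j + k))
                  ≤ ENNReal.ofReal (4 * X) * (∑' (k : ℕ), δ (j + k)) := by
                intro j hj
                refine mul_le_mul_left (ENNReal.ofReal_le_ofReal ?_) _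
                have hj' := Finset.mem_range.1 hj
                have h2 : q ^ (m - j) ≤ q ^ (m - m / 2) :=
                  pow_le_pow_of_le_one hq0.le hq1.le (by omega)
                have h3 : q ^ (m - j) ≤ X := le_trans h2 (le_trans hqr hXm)
                linarith
              refine le_trans (Finset.sum_le_sum h1) ?_
              rw [← Finset.mul_sum]
              refine mul_le_mul_right ?_ _
              refine le_trans (Summable.sum_le_tsum _ (fun _ _ => zero_le) ENNReal.summable) ?_
              rw [hTD]
            have hhigh : ∑ j ∈ Finset.Ico (m / 2 + 1) m,
                ENNReal.ofReal (4 * q ^ (m - j)) * (∑' (k : ℕ), δ (j + k))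
                ≤ ENNReal.ofReal (8 * X) * (D0 + D1) := by
              have h1 : ∀ j ∈ Finset.Ico (m / 2 + 1) m,
                  ENNReal.ofReal (4 * q ^ (m - j)) * (∑' (k : ℕ), δ (j + k))
                  ≤ ENNReal.ofReal (4 * q ^ (m - j)) * (ENNReal.ofReal (2 * (m:ℝ)⁻¹) * D1) := by
                intro j hj
                exact mul_le_mul_right (hThigh j (Finset.mem_Ico.1 hj).1) _
              refine le_trans (Finset.sum_le_sum h1) ?_
              rw [← Finset.sum_mul]
              have h2 : ∑ j ∈ Finset.Ico (m / 2 + 1) m, ENNReal.ofReal (4 * q ^ (m - j))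
                  ≤ ENNReal.ofReal 4 := by
                rw [← ENNReal.ofReal_sum_of_nonneg (fun j _ => by positivity)]
                exact ENNReal.ofReal_le_ofReal hIco
              refine le_trans (mul_le_mul_left h2 _) ?_
              rw [← mul_assoc, ← ENNReal.ofReal_mul (by norm_num)]
              refine mul_le_mul (ENNReal.ofReal_le_ofReal ?_) le_add_self
                zero_le zero_le
              linarith [hXm]
            refine le_trans (add_le_add hlow hhigh) ?_
            rw [← add_mul, ← ENNReal.ofReal_add (by positivity) (by positivity)]
            refine mul_le_mul_left (ENNReal.ofReal_le_ofReal (by linarith)) _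
          · -- tail over j ≥ m
            have hstep : ∀ i : ℕ,
                (∑' (ℓ : ℕ), if m + i ≤ m + ℓ then ENNReal.ofReal (ε (m + ℓ) / ε (m + i)) else 0) *
                  (∑' (k : ℕ), δ ((m + i) + k))
                ≤ ENNReal.ofReal 3 * (∑' (k : ℕ), δ ((m + i) + k)) :=
              fun i => mul_le_mul_left (hW2 i) _
            refine le_trans (Summable.tsum_le_tsum hstep ENNReal.summable ENNReal.summable) ?_
            rw [ENNReal.tsum_mul_left]
            exact mul_le_mul_right hTtail _
      _ ≤ ENNReal.ofReal (27 * X) * (D0 + D1) +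
          ENNReal.ofReal (6 * (m : ℝ) ^ (-(ρ / 2))) * Dρ := by
          have hy : (0:ℝ) ≤ (m : ℝ) ^ (-(ρ / 2)) := Real.rpow_nonneg hm0.le _
          have h1 : ENNReal.ofReal (12 * X) ≤ ENNReal.ofReal (27 * X) :=
            ENNReal.ofReal_le_ofReal (by nlinarith)
          have h2 : ENNReal.ofReal 3 * (ENNReal.ofReal ((m : ℝ) ^ (-(ρ / 2))) * Dρ) +
              ENNReal.ofReal 3 * (ENNReal.ofReal ((m : ℝ) ^ (-(ρ / 2))) * Dρ)
              = ENNReal.ofReal (6 * (m : ℝ) ^ (-(ρ / 2))) * Dρ := by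
            rw [← mul_assoc, ← ENNReal.ofReal_mul (by norm_num), ← add_mul,
              ← ENNReal.ofReal_add (by positivity) (by positivity)]
            rw [show (3:ℝ) * (m : ℝ) ^ (-(ρ / 2)) + 3 * (m : ℝ) ^ (-(ρ / 2))
              = 6 * (m : ℝ) ^ (-(ρ / 2)) by ring]
          calc ENNReal.ofReal (12 * X) * (D0 + D1) +
              ENNReal.ofReal 3 * (ENNReal.ofReal ((m : ℝ) ^ (-(ρ / 2))) * Dρ) +
              ENNReal.ofReal 3 * (ENNReal.ofReal ((m : ℝ) ^ (-(ρ / 2))) * Dρ)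
              ≤ ENNReal.ofReal (27 * X) * (D0 + D1) +
                ENNReal.ofReal 3 * (ENNReal.ofReal ((m : ℝ) ^ (-(ρ / 2))) * Dρ) +
                ENNReal.ofReal 3 * (ENNReal.ofReal ((m : ℝ) ^ (-(ρ / 2))) * Dρ) := by
                exact add_le_add_left (add_le_add_left (mul_le_mul_left h1 _) _) _
            _ = ENNReal.ofReal (27 * X) * (D0 + D1) +
                ENNReal.ofReal (6 * (m : ℝ) ^ (-(ρ / 2))) * Dρ := by
                rw [add_assoc, h2]
  refine ⟨part1, ?_⟩
  intro T hT
  have hD1fin : D1 < ⊤ := lt_of_le_of_lt hD1le hρfin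
  have hDtop : D0 + D1 ≠ ⊤ := ENNReal.add_ne_top.2 ⟨ne_of_lt h0, ne_of_lt hD1fin⟩
  have hDρtop : Dρ ≠ ⊤ := ne_of_lt hρfin
  have ht1 : Filter.Tendsto (fun m : ℕ => 27 * max ((m : ℝ)⁻¹) (q ^ (m - 1)))
      Filter.atTop (nhds 0) := by
    have ha : Filter.Tendsto (fun m : ℕ => ((m : ℝ))⁻¹) Filter.atTop (nhds 0) :=
      tendsto_inv_atTop_zero.comp tendsto_natCast_atTop_atTop
    have hb : Filter.Tendsto (fun m : ℕ => q ^ (m - 1)) Filter.atTop (nhds 0) :=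
      (tendsto_pow_atTop_nhds_zero_of_lt_one hq0.le hq1).comp (Filter.tendsto_sub_atTop_nat 1)
    have hmax := ha.max hb
    rw [max_self] at hmax
    have h27 := hmax.const_mul (b := (27:ℝ))
    rw [mul_zero] at h27
    exact h27
  have ht2 : Filter.Tendsto (fun m : ℕ => 6 * (m : ℝ) ^ (-(ρ / 2)))
      Filter.atTop (nhds 0) := by
    have h := (tendsto_rpow_neg_atTop (by linarith : (0:ℝ) < ρ / 2)).comp
      (tendsto_natCast_atTop_atTop (R := ℝ))
    have h6 := h.const_mul (b := (6:ℝ))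
    rw [mul_zero] at h6
    exact h6
  have hbig : Filter.Tendsto (fun m : ℕ =>
      ENNReal.ofReal (27 * max ((m : ℝ)⁻¹) (q ^ (m - 1))) * (D0 + D1) +
        ENNReal.ofReal (6 * (m : ℝ) ^ (-(ρ / 2))) * Dρ) Filter.atTop (nhds 0) := by
    have h1 : Filter.Tendsto (fun m : ℕ =>
        ENNReal.ofReal (27 * max ((m : ℝ)⁻¹) (q ^ (m - 1))) * (D0 + D1))
        Filter.atTop (nhds 0) := by
      have := ENNReal.Tendsto.mul_const (ENNReal.tendsto_ofReal (a := 0) ht1)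
        (Or.inr hDtop)
      simpa using this
    have h2 : Filter.Tendsto (fun m : ℕ =>
        ENNReal.ofReal (6 * (m : ℝ) ^ (-(ρ / 2))) * Dρ) Filter.atTop (nhds 0) := by
      have := ENNReal.Tendsto.mul_const (ENNReal.tendsto_ofReal (a := 0) ht2)
        (Or.inr hDρtop)
      simpa using this
    simpa using h1.add h2
  have hTne : ENNReal.ofReal T ≠ 0 := by
    simp [ENNReal.ofReal_pos.2 hT, ne_of_gt]
  have hTtop : ENNReal.ofReal T ≠ ⊤ := ENNReal.ofReal_ne_top
  have hinvpos : (0 : ℝ≥0∞) < (ENNReal.ofReal T)⁻¹ := ENNReal.inv_pos.2 hTtop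
  have hev := (hbig.eventually_lt_const hinvpos).and (Filter.eventually_ge_atTop 1)
  obtain ⟨m₀, hm₀⟩ := hev.exists
  refine ⟨m₀, ?_⟩
  calc ENNReal.ofReal T * ∑' (ℓ : ℕ), M (m₀ + ℓ)
      ≤ ENNReal.ofReal T * (ENNReal.ofReal T)⁻¹ :=
        mul_le_mul_right ((part1 m₀ hm₀.2).trans hm₀.1.le) _
    _ = 1 := ENNReal.mul_inv_cancel hTne hTtop
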